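/- For every finitely presented group G and every natural number g ≥ 2, there exist a normal subgroup N of the genus-g surface group SurfaceGroup g and an injective group homomorphism from G into the quotient group (SurfaceGroup g)/N. (Equivalently: every finitely presented group embeds in the deck transformation group of some regular cover of the closed orientable surface of genus g.) -/

import Mathlib

open scoped commutatorElement in
/-- The surface relator `∏ ⁅aᵢ,bᵢ⁆` in `FreeGroup (Fin (2*g))`. -/
def surfaceRelator (g : ℕ) : FreeGroup (Fin (2 * g)) :=
  ((List.finRange g).map fun i =>
    ⁅FreeGroup.of (⟨i.1, by omega⟩ : Fin (2 * g)),
     FreeGroup.of (⟨g + i.1, by omega⟩ : Fin (2 * g))⁆).prod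

/-- The genus-`g` surface group. -/
def SurfaceGroup (g : ℕ) : Type :=
  PresentedGroup ({surfaceRelator g} : Set (FreeGroup (Fin (2 * g))))

instance (g : ℕ) : Group (SurfaceGroup g) := by unfold SurfaceGroup; infer_instance

/-- `G` is finitely presented: isomorphic to a presented group on finitely many
generators with finitely many relators. -/
def IsFinitelyPresented (G : Type*) [Group G] : Prop :=
  ∃ (m : ℕ) (R : Finset (FreeGroup (Fin m))),
    Nonempty (G ≃* PresentedGroup (R : Set (FreeGroup (Fin m))))


open Function

/-- The family `i ↦ y⁻ⁱ x yⁱ` (for `x ≠ y` free generators) is a free family in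
`FreeGroup (Fin 2)`. -/
theorem conj_family_injective (n : ℕ) (hn : n ≠ 0) (x y : Fin 2) (hxy : x ≠ y) :
    Function.Injective (FreeGroup.lift (fun i : Fin n =>
      ((FreeGroup.of y)⁻¹) ^ (i : ℕ) * FreeGroup.of x * (FreeGroup.of y) ^ (i : ℕ)) :
      FreeGroup (Fin n) →* FreeGroup (Fin 2)) := by
  set Z := FreeGroup ℤ
  set sh : MulAut Z := (FreeGroup.freeGroupCongr (Equiv.addRight (1:ℤ)) : Z ≃* Z) with hsh
  set φ : Multiplicative ℤ →* MulAut Z := zpowersHom (MulAut Z) sh with hφ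
  set h : FreeGroup (Fin 2) →* Z ⋊[φ] Multiplicative ℤ :=
    FreeGroup.lift (fun j => if j = x then SemidirectProduct.inl (FreeGroup.of (0:ℤ))
      else SemidirectProduct.inr (Multiplicative.ofAdd 1)) with hh
  have hhx : h (FreeGroup.of x) = SemidirectProduct.inl (FreeGroup.of (0:ℤ)) := by
    simp [hh]
  have hhy : h (FreeGroup.of y) = SemidirectProduct.inr (Multiplicative.ofAdd 1) := by
    simp [hh, hxy.symm]
  have key : ∀ i : ℕ, h (((FreeGroup.of y)⁻¹) ^ i * FreeGroup.of x * (FreeGroup.of y) ^ i)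
      = SemidirectProduct.inl (FreeGroup.of (-(i:ℤ))) := by
    intro i
    induction i with
    | zero => simp [hhx]
    | succ i ih =>
      have hsplit : ((FreeGroup.of y)⁻¹) ^ (i+1) * FreeGroup.of x * (FreeGroup.of y) ^ (i+1)
          = (FreeGroup.of y)⁻¹ * (((FreeGroup.of y)⁻¹) ^ i * FreeGroup.of x
              * (FreeGroup.of y) ^ i) * FreeGroup.of y := by
        rw [pow_succ, pow_succ']
        group
      rw [hsplit]
      simp only [map_mul, map_inv, hhy, ih]
      rw [← map_inv, ← SemidirectProduct.inl_aut_inv]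
      congr 1
      have hφ1 : φ (Multiplicative.ofAdd (1:ℤ)) = sh := by
        simp [hφ]
      rw [hφ1]
      have : (sh⁻¹ : MulAut Z) (FreeGroup.of (-(i:ℤ)))
          = FreeGroup.of ((-(i:ℤ)) - 1) := by
        have hinv : (sh⁻¹ : MulAut Z)
            = (FreeGroup.freeGroupCongr (Equiv.addRight (1:ℤ))).symm := rfl
        rw [hinv]
        simp only [FreeGroup.freeGroupCongr_symm]
        rw [show (Equiv.addRight (1:ℤ)).symm = Equiv.addRight (-1:ℤ) by ext z; simp [sub_eq_add_neg]]
        rw [FreeGroup.freeGroupCongr_apply, FreeGroup.map.of]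
        simp [sub_eq_add_neg]
      rw [this]
      congr 1
      push_cast
      ring
  set ν : Fin n → ℤ := fun i => -(i:ℤ) with hν
  have comp_eq : h.comp (FreeGroup.lift (fun i : Fin n =>
      ((FreeGroup.of y)⁻¹) ^ (i : ℕ) * FreeGroup.of x * (FreeGroup.of y) ^ (i : ℕ)))
      = (SemidirectProduct.inl : Z →* Z ⋊[φ] Multiplicative ℤ).comp (FreeGroup.map ν) := by
    apply FreeGroup.ext_hom
    intro a
    simp only [MonoidHom.comp_apply, FreeGroup.lift_apply_of, FreeGroup.map.of]
    exact key a
  have hμν : ∃ μ : ℤ → Fin n, ∀ i : Fin n, μ (ν i) = i := by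
    refine ⟨fun z => if hz : (-z).toNat < n ∧ 0 ≤ -z then ⟨(-z).toNat, hz.1⟩
      else ⟨0, Nat.pos_of_ne_zero hn⟩, fun i => ?_⟩
    have h1 : (-(ν i)).toNat = (i : ℕ) := by simp [hν]
    have h2 : (0:ℤ) ≤ -(ν i) := by simp [hν]
    dsimp only
    rw [dif_pos ⟨by omega, h2⟩]
    exact Fin.ext h1
  obtain ⟨μ, hμ⟩ := hμν
  have hmapinj : Function.Injective (FreeGroup.map ν : FreeGroup (Fin n) →* Z) := by
    intro u v huv
    have := congrArg (FreeGroup.map μ) huv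
    rwa [FreeGroup.map.comp, FreeGroup.map.comp,
      show (μ ∘ ν) = id from funext fun i => hμ i, FreeGroup.map.id, FreeGroup.map.id] at this
  intro u v huv
  apply hmapinj
  apply SemidirectProduct.inl_injective (φ := φ)
  have h2 : (SemidirectProduct.inl : Z →* Z ⋊[φ] Multiplicative ℤ).comp (FreeGroup.map ν) u
      = (SemidirectProduct.inl : Z →* Z ⋊[φ] Multiplicative ℤ).comp (FreeGroup.map ν) v := by
    rw [← comp_eq]
    simp only [MonoidHom.comp_apply]
    exact congrArg h huv
  simpa using h2

open Monoid Monoid.Coprod in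
/-- Higman–Neumann–Neumann: every group with a finite generating family embeds into a
group generated by two elements. -/
theorem exists_two_gen_embedding {C : Type} [Group C] (m : ℕ) (γ : Fin m → C)
    (hγ : Subgroup.closure (Set.range γ) = ⊤) :
    ∃ (H : Type) (_ : Group H) (x y : H) (j : C →* H),
      Function.Injective j ∧ ∀ z : C, j z ∈ Subgroup.closure {x, y} := by
  classical
  set n := m + 1 with hn
  set F2 := FreeGroup (Fin 2) with hF2
  set tA : Fin n → F2 := fun i =>
    ((FreeGroup.of (1 : Fin 2))⁻¹) ^ (i : ℕ) * FreeGroup.of (0 : Fin 2)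
      * (FreeGroup.of (1 : Fin 2)) ^ (i : ℕ) with htAdef
  set tB : Fin n → F2 := fun i =>
    ((FreeGroup.of (0 : Fin 2))⁻¹) ^ (i : ℕ) * FreeGroup.of (1 : Fin 2)
      * (FreeGroup.of (0 : Fin 2)) ^ (i : ℕ) with htBdef
  set c : Fin n → C := fun i => if h : (i : ℕ) = 0 then 1 else γ ⟨(i : ℕ) - 1, by omega⟩
    with hcdef
  set θA : FreeGroup (Fin n) →* (C ∗ F2) := FreeGroup.lift (fun i => Coprod.inr (tA i))
    with hθAdef
  set θB : FreeGroup (Fin n) →* (C ∗ F2) :=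
    FreeGroup.lift (fun i => Coprod.inl (c i) * Coprod.inr (tB i)) with hθBdef
  have htA : Function.Injective (FreeGroup.lift tA) :=
    conj_family_injective n (by omega) 0 1 (by decide)
  have htB : Function.Injective (FreeGroup.lift tB) :=
    conj_family_injective n (by omega) 1 0 (by decide)
  have hsndA : (Coprod.snd).comp θA = FreeGroup.lift tA := by
    apply FreeGroup.ext_hom; intro a
    simp [hθAdef]
  have hsndB : (Coprod.snd).comp θB = FreeGroup.lift tB := by
    apply FreeGroup.ext_hom; intro a
    simp [hθBdef]
  have hθA : Function.Injective θA := by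
    intro u v huv
    apply htA
    rw [← hsndA]
    simp only [MonoidHom.comp_apply, huv]
  have hθB : Function.Injective θB := by
    intro u v huv
    apply htB
    rw [← hsndB]
    simp only [MonoidHom.comp_apply, huv]
  set φAB : θA.range ≃* θB.range :=
    (MonoidHom.ofInjective hθA).symm.trans (MonoidHom.ofInjective hθB) with hφABdef
  set H := HNNExtension (C ∗ F2) θA.range θB.range φAB with hHdef
  set of' : (C ∗ F2) →* H := HNNExtension.of with hof'def
  have hofinj : Function.Injective of' := HNNExtension.of_injective φAB
  have hconj : ∀ w : FreeGroup (Fin n),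
      (HNNExtension.t : H) * of' (θA w) * (HNNExtension.t : H)⁻¹ = of' (θB w) := by
    intro w
    have h0 : (MonoidHom.ofInjective hθA) w = ⟨θA w, w, rfl⟩ := by
      apply Subtype.ext
      rw [MonoidHom.ofInjective_apply]
    have h1 : ((φAB ⟨θA w, w, rfl⟩ : θB.range) : C ∗ F2) = θB w := by
      rw [hφABdef]
      show ((MonoidHom.ofInjective hθB) ((MonoidHom.ofInjective hθA).symm ⟨θA w, w, rfl⟩)
        : C ∗ F2) = θB w
      rw [← h0, MulEquiv.symm_apply_apply, MonoidHom.ofInjective_apply]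
    have h2 := HNNExtension.equiv_eq_conj (φ := φAB) ⟨θA w, w, rfl⟩
    rw [h1] at h2
    exact h2.symm
  set α : H := of' (Coprod.inr (FreeGroup.of (0 : Fin 2))) with hαdef
  set β : H := of' (Coprod.inr (FreeGroup.of (1 : Fin 2))) with hβdef
  set τ : H := HNNExtension.t with hτdef
  set S : Subgroup H := Subgroup.closure {α, τ} with hSdef
  have hαS : α ∈ S := Subgroup.subset_closure (by simp)
  have hτS : τ ∈ S := Subgroup.subset_closure (by simp)
  set ρ : F2 →* H := of'.comp Coprod.inr with hρdef
  have hρα : ρ (FreeGroup.of (0 : Fin 2)) = α := by rw [hρdef, hαdef]; rfl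
  have hρβ : ρ (FreeGroup.of (1 : Fin 2)) = β := by rw [hρdef, hβdef]; rfl
  have hρA : ∀ i : Fin n, ρ (tA i) = (β⁻¹) ^ (i : ℕ) * α * β ^ (i : ℕ) := by
    intro i
    simp only [htAdef, map_mul, map_pow, map_inv, hρα, hρβ]
    erw [map_inv ρ (FreeGroup.of (1 : Fin 2)), hρβ]
  have hρB : ∀ i : Fin n, ρ (tB i) = (α⁻¹) ^ (i : ℕ) * β * α ^ (i : ℕ) := by
    intro i
    simp only [htBdef, map_mul, map_pow, map_inv, hρα, hρβ]
    erw [map_inv ρ (FreeGroup.of (0 : Fin 2)), hρα]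
  have key2 : ∀ i : Fin n, τ * ρ (tA i) * τ⁻¹ = of' (Coprod.inl (c i)) * ρ (tB i) := by
    intro i
    have h3 := hconj (FreeGroup.of i)
    simp only [hθAdef, hθBdef] at h3
    simp only [FreeGroup.lift_apply_of, map_mul] at h3
    rw [hτdef, hρdef]
    simpa using h3
  have hβS : β ∈ S := by
    have hi0 : (0:ℕ) < n := by omega
    have h4 := key2 ⟨0, hi0⟩
    have e0 : tA ⟨0, hi0⟩ = FreeGroup.of 0 := by simp [htAdef]
    have e1 : tB ⟨0, hi0⟩ = FreeGroup.of 1 := by simp [htBdef]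
    have e2 : c ⟨0, hi0⟩ = 1 := by simp [hcdef]
    rw [e0, e1, e2, hρα, hρβ] at h4
    simp only [map_one, one_mul] at h4
    rw [← h4]
    exact S.mul_mem (S.mul_mem hτS hαS) (S.inv_mem hτS)
  have hρAS : ∀ i : Fin n, ρ (tA i) ∈ S := fun i => by
    rw [hρA i]
    exact S.mul_mem (S.mul_mem (S.pow_mem (S.inv_mem hβS) _) hαS) (S.pow_mem hβS _)
  have hρBS : ∀ i : Fin n, ρ (tB i) ∈ S := fun i => by
    rw [hρB i]
    exact S.mul_mem (S.mul_mem (S.pow_mem (S.inv_mem hαS) _) hβS) (S.pow_mem hαS _)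
  have hcS : ∀ i : Fin n, of' (Coprod.inl (c i)) ∈ S := by
    intro i
    have h5 : of' (Coprod.inl (c i)) = (τ * ρ (tA i) * τ⁻¹) * (ρ (tB i))⁻¹ := by
      rw [key2 i]
      group
    rw [h5]
    exact S.mul_mem (S.mul_mem (S.mul_mem hτS (hρAS i)) (S.inv_mem hτS))
      (S.inv_mem (hρBS i))
  have hγS : ∀ z : C, of' (Coprod.inl z) ∈ S := by
    intro z
    have hz : z ∈ Subgroup.closure (Set.range γ) := hγ ▸ Subgroup.mem_top z
    refine Subgroup.closure_induction (p := fun z _ => of' (Coprod.inl z) ∈ S)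
      ?_ ?_ ?_ ?_ hz
    · rintro _ ⟨j, rfl⟩
      have hc : γ j = c ⟨(j : ℕ) + 1, by omega⟩ := by
        rw [hcdef]
        dsimp only
        rw [dif_neg (by omega)]
        congr 1
      rw [hc]
      exact hcS _
    · simp only [map_one]
      exact S.one_mem
    · intro u v _ _ hu hv
      rw [map_mul, map_mul]
      exact S.mul_mem hu hv
    · intro u _ hu
      rw [map_inv, map_inv]
      exact S.inv_mem hu
  refine ⟨H, inferInstance, α, τ, of'.comp Coprod.inl, ?_, ?_⟩
  · apply hofinj.comp
    intro u v huv
    have h6 := congrArg (Coprod.fst (M := C) (N := F2)) huv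
    simpa using h6
  · intro z
    rw [← hSdef]
    exact hγS z

private lemma finRange_map_prod_eq {M : Type*} [Monoid M] {g : ℕ} (hg : 2 ≤ g) (Q : Fin g → M)
    (h2 : ∀ i : Fin g, 2 ≤ (i : ℕ) → Q i = 1) :
    ((List.finRange g).map Q).prod = Q ⟨0, by omega⟩ * Q ⟨1, by omega⟩ := by
  obtain ⟨k, rfl⟩ : ∃ k, g = k + 2 := ⟨g - 2, by omega⟩
  rw [List.finRange_succ, List.finRange_succ]
  simp only [List.map_cons, List.map_map, List.prod_cons]
  have h3 : ((List.finRange k).map (Q ∘ Fin.succ ∘ Fin.succ)).prod = 1 := by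
    apply List.prod_eq_one
    intro z hz
    rw [List.mem_map] at hz
    obtain ⟨j, _, rfl⟩ := hz
    apply h2
    simp [Fin.succ]
  have e0 : (0 : Fin (k+2)) = ⟨0, by omega⟩ := Fin.ext (by simp)
  have e1 : Fin.succ (0 : Fin (k+1)) = (⟨1, by omega⟩ : Fin (k+2)) := Fin.ext (by simp)
  rw [h3, mul_one, e0, e1]


/-- Every finitely presented group embeds in the deck transformation group of a
regular cover of the closed orientable surface of genus `g ≥ 2`. -/
theorem finitely_presented_embeds_in_deck_group
    (G : Type*) [Group G] (hG : IsFinitelyPresented G) (g : ℕ) (hg : 2 ≤ g) :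
    ∃ (N : Subgroup (SurfaceGroup g)) (hN : N.Normal),
      haveI := hN
      ∃ f : G →* SurfaceGroup g ⧸ N, Function.Injective f := by
  classical
  obtain ⟨m, R, ⟨e⟩⟩ := hG
  obtain ⟨H, hgrp, x, y, j, hjinj, hjS⟩ :=
    exists_two_gen_embedding m (PresentedGroup.of (rels := (R : Set (FreeGroup (Fin m)))))
      (PresentedGroup.closure_range_of _)
  set Ffun : Fin (2 * g) → H := fun v =>
    if (v : ℕ) = 0 then x else if (v : ℕ) = 1 then y
    else if (v : ℕ) = g then y else if (v : ℕ) = g + 1 then x else 1 with hFdef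
  have hFval : ∀ (v : ℕ) (hv : v < 2 * g), Ffun ⟨v, hv⟩ =
      if v = 0 then x else if v = 1 then y
      else if v = g then y else if v = g + 1 then x else 1 := fun v hv => rfl
  have hF0 : Ffun ⟨0, by omega⟩ = x := by rw [hFval]; simp
  have hF1 : Ffun ⟨1, by omega⟩ = y := by rw [hFval]; simp
  have hFg : Ffun ⟨g + 0, by omega⟩ = y := by
    rw [hFval, if_neg (by omega), if_neg (by omega), if_pos (by omega)]
  have hFg1 : Ffun ⟨g + 1, by omega⟩ = x := by
    rw [hFval, if_neg (by omega), if_neg (by omega), if_neg (by omega), if_pos rfl]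
  have hrel : ∀ r ∈ ({surfaceRelator g} : Set (FreeGroup (Fin (2 * g)))),
      FreeGroup.lift Ffun r = 1 := by
    intro r hr
    rw [Set.mem_singleton_iff] at hr
    subst hr
    rw [surfaceRelator, map_list_prod, List.map_map]
    rw [finRange_map_prod_eq hg _ ?h2]
    case h2 =>
      intro i hi
      simp only [Function.comp_apply, map_commutatorElement, FreeGroup.lift_apply_of]
      have hz : Ffun ⟨(i : ℕ), by omega⟩ = 1 := by
        rw [hFval, if_neg (by omega), if_neg (by omega), if_neg (by omega),
          if_neg (by omega)]
      rw [hz]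
      simp [commutatorElement_def]
    simp only [Function.comp_apply, map_commutatorElement, FreeGroup.lift_apply_of]
    rw [hF0, hF1, hFg, hFg1]
    rw [← commutatorElement_inv x y]
    exact mul_inv_cancel _
  let Φ : SurfaceGroup g →* H := PresentedGroup.toGroup hrel
  refine ⟨Φ.ker, inferInstance, ?_⟩
  have hx : x ∈ Φ.range := ⟨PresentedGroup.of ⟨0, by omega⟩, by
    show PresentedGroup.toGroup hrel (PresentedGroup.of _) = x
    rw [PresentedGroup.toGroup.of]
    exact hF0⟩
  have hy : y ∈ Φ.range := ⟨PresentedGroup.of ⟨1, by omega⟩, by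
    show PresentedGroup.toGroup hrel (PresentedGroup.of _) = y
    rw [PresentedGroup.toGroup.of]
    exact hF1⟩
  have hSle : Subgroup.closure {x, y} ≤ Φ.range := by
    apply (Subgroup.closure_le _).mpr
    rintro z hz
    rcases hz with rfl | rfl
    · exact hx
    · exact hy
  have hjrange : ∀ w : G, j (e w) ∈ Φ.range := fun w => hSle (hjS (e w))
  let f₁ : G →* Φ.range :=
    MonoidHom.codRestrict (j.comp e.toMonoidHom) Φ.range hjrange
  let E := QuotientGroup.quotientKerEquivRange Φ
  refine ⟨E.symm.toMonoidHom.comp f₁, ?_⟩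
  intro u v huv
  have h7 : f₁ u = f₁ v := E.symm.injective huv
  have h8 : j (e u) = j (e v) := congrArg Subtype.val h7
  exact e.injective (hjinj h8)
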